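/- For F : ℝⁿ → ℝ, h : ℝᵈ → ℝ with h convex, matrices A ∈ ℝ^{p×n}, B ∈ ℝ^{p×d}, c ∈ ℝᵖ and ρ > 0, let L_ρ(x,y,λ) = F(x) + h(y) − ⟨λ, Ax + By − c⟩ + (ρ/2)‖Ax + By − c‖². Let H ∈ ℝ^{d×d} be symmetric with s_H‖w‖² ≤ ⟨w, Hw⟩ for all w ∈ ℝᵈ, where s_H > 0. Fix x ∈ ℝⁿ, λ ∈ ℝᵖ, y₀ ∈ ℝᵈ, and suppose y₊ ∈ ℝᵈ is a global minimizer over ℝᵈ of the function y ↦ L_ρ(x, y, λ) + (1/2)⟨y − y₀, H(y − y₀)⟩. Then L_ρ(x, y₊, λ) ≤ L_ρ(x, y₀, λ) − s_H‖y₊ − y₀‖². -/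
import Mathlib

open Matrix
open scoped RealInnerProductSpace

/-- The action of a real matrix on Euclidean space. -/
noncomputable def mvec {m n : ℕ} (A : Matrix (Fin m) (Fin n) ℝ)
    (x : EuclideanSpace ℝ (Fin n)) : EuclideanSpace ℝ (Fin m) :=
  (WithLp.equiv 2 (Fin m → ℝ)).symm (A.mulVec ((WithLp.equiv 2 (Fin n → ℝ)) x))

lemma mvec_add {m n : ℕ} (A : Matrix (Fin m) (Fin n) ℝ)
    (x y : EuclideanSpace ℝ (Fin n)) : mvec A (x + y) = mvec A x + mvec A y := by
  ext i; simp [mvec, Matrix.mulVec_add]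

lemma mvec_smul {m n : ℕ} (A : Matrix (Fin m) (Fin n) ℝ) (t : ℝ)
    (x : EuclideanSpace ℝ (Fin n)) : mvec A (t • x) = t • mvec A x := by
  ext i; simp [mvec, Matrix.mulVec_smul]

/-- The augmented Lagrangian `L_ρ(x, y, λ)` of the problem
`min F(x) + h(y)  s.t.  Ax + By = c`. -/
noncomputable def augLag {n d p : ℕ} (F : EuclideanSpace ℝ (Fin n) → ℝ)
    (h : EuclideanSpace ℝ (Fin d) → ℝ) (A : Matrix (Fin p) (Fin n) ℝ)
    (B : Matrix (Fin p) (Fin d) ℝ) (c : EuclideanSpace ℝ (Fin p)) (ρ : ℝ)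
    (x : EuclideanSpace ℝ (Fin n)) (y : EuclideanSpace ℝ (Fin d))
    (lam : EuclideanSpace ℝ (Fin p)) : ℝ :=
  F x + h y - ⟪lam, mvec A x + mvec B y - c⟫ + (ρ / 2) * ‖mvec A x + mvec B y - c‖ ^ 2

set_option maxHeartbeats 1000000

theorem stmt_4 {n d p : ℕ} (F : EuclideanSpace ℝ (Fin n) → ℝ)
    (h : EuclideanSpace ℝ (Fin d) → ℝ) (hconv : ConvexOn ℝ Set.univ h)
    (A : Matrix (Fin p) (Fin n) ℝ) (B : Matrix (Fin p) (Fin d) ℝ)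
    (c : EuclideanSpace ℝ (Fin p)) (ρ : ℝ) (hρ : 0 < ρ)
    (H : Matrix (Fin d) (Fin d) ℝ) (hHsymm : H.IsSymm)
    (sH : ℝ) (hsH : 0 < sH)
    (hH : ∀ w : EuclideanSpace ℝ (Fin d), sH * ‖w‖ ^ 2 ≤ ⟪w, mvec H w⟫)
    (x : EuclideanSpace ℝ (Fin n)) (lam : EuclideanSpace ℝ (Fin p))
    (y₀ yp : EuclideanSpace ℝ (Fin d))
    (hmin : ∀ y' : EuclideanSpace ℝ (Fin d),
      augLag F h A B c ρ x yp lam + (1 / 2) * ⟪yp - y₀, mvec H (yp - y₀)⟫ ≤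
        augLag F h A B c ρ x y' lam + (1 / 2) * ⟪y' - y₀, mvec H (y' - y₀)⟫) :
    augLag F h A B c ρ x yp lam ≤ augLag F h A B c ρ x y₀ lam - sH * ‖yp - y₀‖ ^ 2 := by
  set w : EuclideanSpace ℝ (Fin d) := yp - y₀ with hw
  set Q : ℝ := (1 / 2) * ⟪w, mvec H w⟫ with hQdef
  set gp : ℝ := augLag F h A B c ρ x yp lam with hgp
  set g0 : ℝ := augLag F h A B c ρ x y₀ lam with hg0
  have hQlb : sH * ‖w‖ ^ 2 ≤ 2 * Q := by
    have := hH w; rw [hQdef]; linarith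
  have hQ0 : 0 ≤ Q := by
    nlinarith [mul_nonneg hsH.le (sq_nonneg ‖w‖)]
  -- key inequality along the segment
  have key : ∀ t : ℝ, 0 ≤ t → t ≤ 1 →
      gp + Q ≤ (1 - t) * g0 + t * gp + t ^ 2 * Q := by
    intro t ht0 ht1
    have hmin' := hmin (y₀ + t • w)
    have hyt : y₀ + t • w = (1 - t) • y₀ + t • yp := by
      rw [hw]; module
    have hconvh : h (y₀ + t • w) ≤ (1 - t) * h y₀ + t * h yp := by
      rw [hyt]
      exact hconv.2 (Set.mem_univ _) (Set.mem_univ _) (by linarith) ht0 (by ring)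
    set u : EuclideanSpace ℝ (Fin p) := mvec A x + mvec B y₀ - c with hu
    set bw : EuclideanSpace ℝ (Fin p) := mvec B w with hbw
    have hyp_eq : yp = y₀ + w := by rw [hw]; abel
    have hBp : mvec A x + mvec B yp - c = u + bw := by
      rw [hyp_eq, mvec_add, hu, hbw]; abel
    have hBt : mvec A x + mvec B (y₀ + t • w) - c = u + t • bw := by
      rw [mvec_add, mvec_smul, hu, hbw]; abel
    have hqt : (1 / 2 : ℝ) * ⟪(y₀ + t • w) - y₀, mvec H ((y₀ + t • w) - y₀)⟫ = t ^ 2 * Q := by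
      have : (y₀ + t • w) - y₀ = t • w := by abel
      rw [this, mvec_smul, real_inner_smul_left, real_inner_smul_right, hQdef]; ring
    -- norm expansions
    have hnp : ‖u + bw‖ ^ 2 = ‖u‖ ^ 2 + 2 * ⟪u, bw⟫ + ‖bw‖ ^ 2 := by
      rw [norm_add_sq_real]
    have hnt : ‖u + t • bw‖ ^ 2 = ‖u‖ ^ 2 + 2 * (t * ⟪u, bw⟫) + t ^ 2 * ‖bw‖ ^ 2 := by
      rw [norm_add_sq_real, real_inner_smul_right, norm_smul]
      simp only [mul_pow, sq_abs, Real.norm_eq_abs]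
      try ring
    -- inner product expansions
    have hlp : ⟪lam, u + bw⟫ = ⟪lam, u⟫ + ⟪lam, bw⟫ := inner_add_right _ _ _
    have hlt : ⟪lam, u + t • bw⟫ = ⟪lam, u⟫ + t * ⟪lam, bw⟫ := by
      rw [inner_add_right, real_inner_smul_right]
    rw [hqt] at hmin'
    have hexp_p : gp = F x + h yp - (⟪lam, u⟫ + ⟪lam, bw⟫)
        + (ρ / 2) * (‖u‖ ^ 2 + 2 * ⟪u, bw⟫ + ‖bw‖ ^ 2) := by
      rw [hgp, augLag, hBp, hlp, hnp]
    have hexp_0 : g0 = F x + h y₀ - ⟪lam, u⟫ + (ρ / 2) * ‖u‖ ^ 2 := by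
      rw [hg0, augLag, hu]
    have hexp_t : augLag F h A B c ρ x (y₀ + t • w) lam
        = F x + h (y₀ + t • w) - (⟪lam, u⟫ + t * ⟪lam, bw⟫)
          + (ρ / 2) * (‖u‖ ^ 2 + 2 * (t * ⟪u, bw⟫) + t ^ 2 * ‖bw‖ ^ 2) := by
      rw [augLag, hBt, hlt, hnt]
    rw [hexp_t] at hmin'
    have ht2 : t ^ 2 ≤ t := by nlinarith
    have hpos : (0:ℝ) ≤ ρ / 2 * (t - t ^ 2) * ‖bw‖ ^ 2 :=
      mul_nonneg (mul_nonneg (by linarith) (by linarith)) (sq_nonneg ‖bw‖)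
    rw [hexp_p, hexp_0]
    set hy0 : ℝ := h y₀
    set hyp' : ℝ := h yp
    set hyt' : ℝ := h (y₀ + t • w)
    set Fx : ℝ := F x
    set la : ℝ := ⟪lam, u⟫
    set lb : ℝ := ⟪lam, bw⟫
    set uu : ℝ := ‖u‖ ^ 2
    set ub : ℝ := ⟪u, bw⟫
    set bb : ℝ := ‖bw‖ ^ 2
    clear_value hy0 hyp' hyt' Fx la lb uu ub bb Q
    rw [hexp_p] at hmin'
    clear_value gp g0
    clear hmin hH hconv hexp_t hqt hBp hBt hnp hnt hlp hlt hyt hgp hg0 hyp_eq hQdef hQlb hQ0 hexp_p hexp_0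
    linarith only [hmin', hconvh, hpos]
  -- pass to t → 1
  have main : gp ≤ g0 - 2 * Q := by
    by_contra hcon
    push_neg at hcon
    have h0 := key 0 le_rfl zero_le_one
    simp at h0
    -- h0 : gp + Q ≤ g0
    have hD : Q ≤ g0 - gp := by linarith
    have hQpos : 0 < Q := by
      rcases hQ0.lt_or_eq with hq | hq
      · exact hq
      · exfalso; rw [← hq] at hD hcon; linarith
    set t : ℝ := (g0 - gp) / (2 * Q) with htdef
    have ht0 : 0 ≤ t := by
      apply div_nonneg <;> nlinarith
    have ht1 : t ≤ 1 := by
      rw [htdef, div_le_one (by linarith)]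
      linarith
    have hk := key t ht0 ht1
    have htQ : t * (2 * Q) = g0 - gp := by
      rw [htdef]; field_simp
    nlinarith [hk, sq_nonneg (1 - t), mul_pos hQpos hQpos]
  calc gp ≤ g0 - 2 * Q := main
    _ ≤ g0 - sH * ‖w‖ ^ 2 := by linarith
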